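/- Let (C₁, C₂) ⊆ {0,1}ⁿ be a 0.5 partially correcting codebook pair with zero error over W⁺_{2,1}, with |C₁|,|C₂| > 1. Then |C₁| + |C₂| ≤ C(n, ⌈n/2⌉) + 2. -/

import Mathlib

open Finset in
/-- Sperner bound for antichains of binary vectors. -/
lemma sperner_binary (n : ℕ) (T : Set (Fin n → ℕ))
    (hbin : ∀ x ∈ T, ∀ i, x i ≤ 1)
    (hanti : ∀ x ∈ T, ∀ y ∈ T, x ≤ y → x = y) :
    T.ncard ≤ Nat.choose n ((n + 1) / 2) ∧ T.Finite := by
  classical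
  set supp : (Fin n → ℕ) → Finset (Fin n) := fun x => Finset.univ.filter (fun i => x i ≠ 0)
    with hsupp
  have hmem : ∀ x (i : Fin n), i ∈ supp x ↔ x i ≠ 0 := by
    intro x i; simp [hsupp]
  have hle : ∀ x ∈ T, ∀ y ∈ T, supp x ⊆ supp y → x ≤ y := by
    intro x hx y hy hsub i
    by_cases h0 : x i = 0
    · simp [h0]
    · have hiy : i ∈ supp y := hsub ((hmem x i).mpr h0)
      have h1 := (hmem y i).mp hiy
      have h2 := hbin x hx i
      show x i ≤ y i
      omega
  have hinj : Set.InjOn supp T := by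
    intro x hx y hy hxy
    exact hanti x hx y hy (hle x hx y hy (le_of_eq hxy))
  have hfin : T.Finite := Set.Finite.of_finite_image (Set.toFinite _) hinj
  refine ⟨?_, hfin⟩
  set F : Finset (Fin n → ℕ) := hfin.toFinset with hF
  set 𝒜 : Finset (Finset (Fin n)) := F.image supp with hA
  have hinj' : Set.InjOn supp ↑F := by
    intro x hx y hy; exact hinj (by simpa [hF] using hx) (by simpa [hF] using hy)
  have hcard : 𝒜.card = T.ncard := by
    rw [hA, Finset.card_image_of_injOn hinj', ← Set.ncard_coe_finset, hF]
    simp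
  have hanti𝒜 : IsAntichain (· ⊆ ·) (𝒜 : Set (Finset (Fin n))) := by
    intro s hs t ht hne hsub
    simp only [hA, Finset.coe_image, Set.mem_image, Finset.mem_coe] at hs ht
    obtain ⟨x, hx, rfl⟩ := hs
    obtain ⟨y, hy, rfl⟩ := ht
    have hx' : x ∈ T := by simpa [hF] using hx
    have hy' : y ∈ T := by simpa [hF] using hy
    exact hne (by rw [hanti x hx' y hy' (hle x hx' y hy' hsub)])
  have := IsAntichain.sperner hanti𝒜
  rw [hcard, Fintype.card_fin] at this
  have hsym : Nat.choose n (n / 2) = Nat.choose n ((n + 1) / 2) := by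
    rw [show (n + 1) / 2 = n - n / 2 by omega, Nat.choose_symm (Nat.div_le_self n 2)]
  omega

/-- No-adversary outputs for a two-user codebook pair. -/
def A0 (n : ℕ) (C1 C2 : Set (Fin n → ℕ)) : Set (Fin n → ℕ) :=
  {u | ∃ x1 ∈ C1, ∃ x2 ∈ C2, u = x1 + x2}

/-- Adversarial outputs over `W⁺_{2,1}`: nonzero binary state vectors. -/
def A1 (n : ℕ) (C1 C2 : Set (Fin n → ℕ)) : Set (Fin n → ℕ) :=
  {w | ∃ x1 ∈ C1, ∃ x2 ∈ C2, ∃ s : Fin n → ℕ,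
    (∀ i, s i ≤ 1) ∧ s ≠ 0 ∧ w = s + x1 + x2}

/-- Condition (1): `A₀ ∩ A₁ = ∅`. -/
def Cond1 (n : ℕ) (C1 C2 : Set (Fin n → ℕ)) : Prop := A0 n C1 C2 ∩ A1 n C1 C2 = ∅

/-- Condition (2): the elements of the multiset `A₀` are unique, i.e. the sum map is
injective on `C1 × C2`. -/
def Cond2 (n : ℕ) (C1 C2 : Set (Fin n → ℕ)) : Prop :=
  ∀ x1 ∈ C1, ∀ x1' ∈ C1, ∀ x2 ∈ C2, ∀ x2' ∈ C2,
    x1 + x2 = x1' + x2' → x1 = x1' ∧ x2 = x2'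

/-- Condition (3) for `γ = 0.5`, `t = 2` (so `⌈γt⌉ = 1`): for every element of `A₁`
there is a fixed user on which all adversarial representations of it agree. -/
def Cond3 (n : ℕ) (C1 C2 : Set (Fin n → ℕ)) : Prop :=
  ∀ w : Fin n → ℕ, ∃ j : Fin 2,
    ∀ x1 ∈ C1, ∀ x2 ∈ C2, ∀ x1' ∈ C1, ∀ x2' ∈ C2, ∀ s s' : Fin n → ℕ,
      (∀ i, s i ≤ 1) → s ≠ 0 → (∀ i, s' i ≤ 1) → s' ≠ 0 →
      w = s + x1 + x2 → w = s' + x1' + x2' →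
      (j = 0 → x1 = x1') ∧ (j = 1 → x2 = x2')

/-- A zero-error `0.5` partially correcting codebook pair over `W⁺_{2,1}`
with `|C1|, |C2| > 1` satisfies `|C1| + |C2| ≤ C(n, ⌈n/2⌉) + 2`. -/
theorem stmt_9 (n : ℕ) (C1 C2 : Set (Fin n → ℕ))
    (hbin1 : ∀ x ∈ C1, ∀ i, x i ≤ 1) (hbin2 : ∀ x ∈ C2, ∀ i, x i ≤ 1)
    (h1 : Cond1 n C1 C2) (h2 : Cond2 n C1 C2) (h3 : Cond3 n C1 C2)
    (hC1 : C1.Nontrivial) (hC2 : C2.Nontrivial) :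
    C1.ncard + C2.ncard ≤ Nat.choose n ((n + 1) / 2) + 2 := by
  classical
  obtain ⟨a0, ha0, -, -, -⟩ := hC1
  obtain ⟨b0, hb0, -, -, -⟩ := hC2
  -- subtraction helpers
  have hsub : ∀ x y : Fin n → ℕ, x ≤ y → (fun i => y i - x i) + x = y := by
    intro x y h; funext i
    have h' : x i ≤ y i := h i
    show y i - x i + x i = y i
    omega
  have hsnz : ∀ x y : Fin n → ℕ, x ≤ y → x ≠ y → (fun i => y i - x i) ≠ (0 : Fin n → ℕ) := by
    intro x y h hne h0
    apply hne; funext i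
    have h1 : y i - x i = 0 := congrFun h0 i
    have h2 : x i ≤ y i := h i
    omega
  have hbsub : ∀ x y : Fin n → ℕ, (∀ i, y i ≤ 1) → ∀ i, (fun i => y i - x i) i ≤ 1 := by
    intro x y hy i; have := hy i; simp only; omega
  have hempty : ∀ w, w ∈ A0 n C1 C2 → w ∈ A1 n C1 C2 → False := by
    intro w hw0 hw1
    have : w ∈ A0 n C1 C2 ∩ A1 n C1 C2 := ⟨hw0, hw1⟩
    rw [h1] at this
    exact this
  -- each codebook is an antichain
  have hach1 : ∀ x ∈ C1, ∀ y ∈ C1, x ≤ y → x = y := by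
    intro x hx y hy hle
    by_contra hne
    refine hempty (y + b0) ⟨y, hy, b0, hb0, rfl⟩
      ⟨x, hx, b0, hb0, fun i => y i - x i, hbsub x y (hbin1 y hy), hsnz x y hle hne, ?_⟩
    rw [show (fun i => y i - x i) + x + b0 = ((fun i => y i - x i) + x) + b0 from rfl,
      hsub x y hle]
  have hach2 : ∀ x ∈ C2, ∀ y ∈ C2, x ≤ y → x = y := by
    intro x hx y hy hle
    by_contra hne
    refine hempty (a0 + y) ⟨a0, ha0, y, hy, rfl⟩
      ⟨a0, ha0, x, hx, fun i => y i - x i, hbsub x y (hbin2 y hy), hsnz x y hle hne, ?_⟩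
    funext i
    have h' : x i ≤ y i := hle i
    show a0 i + y i = y i - x i + a0 i + x i
    omega
  -- cross-pair lemmas from Cond3
  have hP1 : ∀ a ∈ C1, ∀ b ∈ C2, ∀ c ∈ C1, ∀ d ∈ C2,
      a ≤ b → a ≠ b → c ≤ d → c ≠ d → a = c ∨ b = d := by
    intro a ha b hb c hc d hd hab hnab hcd hncd
    obtain ⟨j, hj⟩ := h3 (b + d)
    have key := hj a ha d hd c hc b hb (fun i => b i - a i) (fun i => d i - c i)
      (hbsub a b (hbin2 b hb)) (hsnz a b hab hnab)
      (hbsub c d (hbin2 d hd)) (hsnz c d hcd hncd)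
      (by funext i; have h' : a i ≤ b i := hab i; show b i + d i = b i - a i + a i + d i; omega)
      (by funext i; have h' : c i ≤ d i := hcd i; show b i + d i = d i - c i + c i + b i; omega)
    fin_cases j
    · exact Or.inl (key.1 rfl)
    · exact Or.inr (key.2 rfl).symm
  have hP2 : ∀ a ∈ C1, ∀ b ∈ C2, ∀ c ∈ C1, ∀ d ∈ C2,
      b ≤ a → a ≠ b → d ≤ c → c ≠ d → a = c ∨ b = d := by
    intro a ha b hb c hc d hd hba hnab hdc hncd
    obtain ⟨j, hj⟩ := h3 (a + c)
    have key := hj c hc b hb a ha d hd (fun i => a i - b i) (fun i => c i - d i)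
      (hbsub b a (hbin1 a ha)) (hsnz b a hba (fun h => hnab h.symm))
      (hbsub d c (hbin1 c hc)) (hsnz d c hdc (fun h => hncd h.symm))
      (by funext i; have h' : b i ≤ a i := hba i; show a i + c i = a i - b i + c i + b i; omega)
      (by funext i; have h' : d i ≤ c i := hdc i; show a i + c i = c i - d i + a i + d i; omega)
    fin_cases j
    · exact Or.inl (key.1 rfl).symm
    · exact Or.inr (key.2 rfl)
  -- the intersection is a subsingleton
  have hint : ∀ c ∈ C1 ∩ C2, ∀ c' ∈ C1 ∩ C2, c = c' := by
    intro c hc c' hc'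
    exact (h2 c hc.1 c' hc'.1 c' hc'.2 c hc.2 (add_comm c c')).1
  by_cases hdis : C1 ∩ C2 = ∅
  · -- disjoint case: remove at most two elements to get an antichain
    have he1 : ∃ e : Fin n → ℕ, ∀ a ∈ C1, ∀ b ∈ C2, a ≤ b → a ≠ b → a = e ∨ b = e := by
      by_cases h0 : ∃ a ∈ C1, ∃ b ∈ C2, a ≤ b ∧ a ≠ b
      · obtain ⟨p, hp, q, hq, hlepq, hnepq⟩ := h0
        by_cases hall : ∀ a ∈ C1, ∀ b ∈ C2, a ≤ b → a ≠ b → a = p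
        · exact ⟨p, fun a ha b hb hle hne => Or.inl (hall a ha b hb hle hne)⟩
        · push_neg at hall
          obtain ⟨c, hc, d, hd, hlecd, hnecd, hcp⟩ := hall
          have hdq : d = q := (hP1 c hc d hd p hp q hq hlecd hnecd hlepq hnepq).resolve_left hcp
          rw [hdq] at hd hlecd hnecd
          refine ⟨q, fun a ha b hb hle hne => ?_⟩
          by_cases hbq : b = q
          · exact Or.inr hbq
          · have h₁ := (hP1 a ha b hb p hp q hq hle hne hlepq hnepq).resolve_right hbq
            have h₂ := (hP1 a ha b hb c hc q hq hle hne hlecd hnecd).resolve_right hbq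
            exact absurd (h₁ ▸ h₂ : p = c) (fun h => hcp h.symm)
      · exact ⟨0, fun a ha b hb hle hne => absurd ⟨a, ha, b, hb, hle, hne⟩ h0⟩
    have he2 : ∃ e : Fin n → ℕ, ∀ a ∈ C1, ∀ b ∈ C2, b ≤ a → a ≠ b → a = e ∨ b = e := by
      by_cases h0 : ∃ a ∈ C1, ∃ b ∈ C2, b ≤ a ∧ a ≠ b
      · obtain ⟨p, hp, q, hq, hlepq, hnepq⟩ := h0
        by_cases hall : ∀ a ∈ C1, ∀ b ∈ C2, b ≤ a → a ≠ b → a = p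
        · exact ⟨p, fun a ha b hb hle hne => Or.inl (hall a ha b hb hle hne)⟩
        · push_neg at hall
          obtain ⟨c, hc, d, hd, hlecd, hnecd, hcp⟩ := hall
          have hdq : d = q := (hP2 c hc d hd p hp q hq hlecd hnecd hlepq hnepq).resolve_left hcp
          rw [hdq] at hd hlecd hnecd
          refine ⟨q, fun a ha b hb hle hne => ?_⟩
          by_cases hbq : b = q
          · exact Or.inr hbq
          · have h₁ := (hP2 a ha b hb p hp q hq hle hne hlepq hnepq).resolve_right hbq
            have h₂ := (hP2 a ha b hb c hc q hq hle hne hlecd hnecd).resolve_right hbq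
            exact absurd (h₁ ▸ h₂ : p = c) (fun h => hcp h.symm)
      · exact ⟨0, fun a ha b hb hle hne => absurd ⟨a, ha, b, hb, hle, hne⟩ h0⟩
    obtain ⟨e1, he1⟩ := he1
    obtain ⟨e2, he2⟩ := he2
    set T : Set (Fin n → ℕ) := (C1 ∪ C2) \ {e1, e2} with hT
    have hantiT : ∀ x ∈ T, ∀ y ∈ T, x ≤ y → x = y := by
      rintro x ⟨hxu, hxe⟩ y ⟨hyu, hye⟩ hle
      simp only [Set.mem_insert_iff, Set.mem_singleton_iff, not_or] at hxe hye
      by_contra hne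
      rcases hxu with hx | hx <;> rcases hyu with hy | hy
      · exact hne (hach1 x hx y hy hle)
      · rcases he1 x hx y hy hle hne with h | h
        · exact hxe.1 h
        · exact hye.1 h
      · rcases he2 y hy x hx hle (fun h => hne h.symm) with h | h
        · exact hye.2 h
        · exact hxe.2 h
      · exact hne (hach2 x hx y hy hle)
    have hbinT : ∀ x ∈ T, ∀ i, x i ≤ 1 := by
      rintro x ⟨hxu, -⟩ i
      rcases hxu with hx | hx
      · exact hbin1 x hx i
      · exact hbin2 x hx i
    obtain ⟨hTle, hTfin⟩ := sperner_binary n T hbinT hantiT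
    have hUfin : (C1 ∪ C2).Finite := by
      have : C1 ∪ C2 ⊆ T ∪ {e1, e2} := by
        intro x hx
        by_cases hxe : x ∈ ({e1, e2} : Set (Fin n → ℕ))
        · exact Or.inr hxe
        · exact Or.inl ⟨hx, hxe⟩
      exact Set.Finite.subset (hTfin.union ((Set.finite_singleton e2).insert e1)) this
    have hUcard : (C1 ∪ C2).ncard ≤ T.ncard + 2 := by
      have hsubU : C1 ∪ C2 ⊆ T ∪ {e1, e2} := by
        intro x hx
        by_cases hxe : x ∈ ({e1, e2} : Set (Fin n → ℕ))
        · exact Or.inr hxe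
        · exact Or.inl ⟨hx, hxe⟩
      calc (C1 ∪ C2).ncard ≤ (T ∪ {e1, e2}).ncard :=
            Set.ncard_le_ncard hsubU (hTfin.union ((Set.finite_singleton e2).insert e1))
        _ ≤ T.ncard + ({e1, e2} : Set (Fin n → ℕ)).ncard := Set.ncard_union_le _ _
        _ ≤ T.ncard + 2 := by
            have : ({e1, e2} : Set (Fin n → ℕ)).ncard ≤ 2 := by
              apply le_trans (Set.ncard_insert_le _ _)
              simp
            omega
    have hdisj : Disjoint C1 C2 := Set.disjoint_iff_inter_eq_empty.mpr hdis
    have hsum : C1.ncard + C2.ncard = (C1 ∪ C2).ncard := by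
      rw [Set.ncard_union_eq hdisj (hUfin.subset Set.subset_union_left)
        (hUfin.subset Set.subset_union_right)]
    omega
  · -- intersecting case: the union is already an antichain
    obtain ⟨c, hcc⟩ := Set.nonempty_iff_ne_empty.mpr hdis
    have hnc1 : ∀ a ∈ C1, ∀ b ∈ C2, a ≤ b → a = b := by
      intro a ha b hb hle
      by_contra hne
      refine hempty (c + b) ⟨c, hcc.1, b, hb, rfl⟩
        ⟨a, ha, c, hcc.2, fun i => b i - a i, hbsub a b (hbin2 b hb), hsnz a b hle hne, ?_⟩
      funext i
      have h' : a i ≤ b i := hle i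
      show c i + b i = b i - a i + a i + c i
      omega
    have hnc2 : ∀ a ∈ C1, ∀ b ∈ C2, b ≤ a → a = b := by
      intro a ha b hb hle
      by_contra hne
      refine hempty (a + c) ⟨a, ha, c, hcc.2, rfl⟩
        ⟨c, hcc.1, b, hb, fun i => a i - b i, hbsub b a (hbin1 a ha),
          hsnz b a hle (fun h => hne h.symm), ?_⟩
      funext i
      have h' : b i ≤ a i := hle i
      show a i + c i = a i - b i + c i + b i
      omega
    have hantiU : ∀ x ∈ C1 ∪ C2, ∀ y ∈ C1 ∪ C2, x ≤ y → x = y := by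
      rintro x hxu y hyu hle
      rcases hxu with hx | hx <;> rcases hyu with hy | hy
      · exact hach1 x hx y hy hle
      · exact hnc1 x hx y hy hle
      · exact (hnc2 y hy x hx hle).symm
      · exact hach2 x hx y hy hle
    have hbinU : ∀ x ∈ C1 ∪ C2, ∀ i, x i ≤ 1 := by
      rintro x hxu i
      rcases hxu with hx | hx
      · exact hbin1 x hx i
      · exact hbin2 x hx i
    obtain ⟨hUle, hUfin⟩ := sperner_binary n (C1 ∪ C2) hbinU hantiU
    have hIcard : (C1 ∩ C2).ncard ≤ 1 := by
      have : C1 ∩ C2 = {c} := by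
        ext x
        constructor
        · intro hx; exact (hint x hx c hcc)
        · rintro rfl; exact hcc
      rw [this]; simp
    have hsum := Set.ncard_union_add_ncard_inter C1 C2
      (hUfin.subset Set.subset_union_left) (hUfin.subset Set.subset_union_right)
    omega
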